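/- Let x solve ẍ(t) + (α/t)ẋ(t) + ∇_x f̃(x(t),μ(t)) = 0 with α ≥ 3, argmin f ≠ ∅, and ∫_{t₀}^∞ t μ(t) dt < ∞. Then f(x(t)) − min f = O(1/t²) as t → ∞. -/

import Mathlib

open MeasureTheory Filter Asymptotics Set

open RealInnerProductSpace in
lemma grad_ineq {H : Type*} [NormedAddCommGroup H] [InnerProductSpace ℝ H] [CompleteSpace H]
    {φ : H → ℝ} (hc : ConvexOn ℝ Set.univ φ) {g a : H} (hg : HasGradientAt φ g a) (b : H) :
    ⟪g, b - a⟫ ≤ φ b - φ a := by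
  set ψ : ℝ → ℝ := fun s => φ (s • (b - a) + a) with hψ
  have hcψ : ConvexOn ℝ Set.univ ψ := by
    have := hc.comp_affineMap (AffineMap.lineMap a b)
    have h2 : (φ ∘ ⇑(AffineMap.lineMap a b)) = ψ := by
      funext s
      simp only [ψ, Function.comp_apply, AffineMap.lineMap_apply_module]
      congr 1
      module
    rw [h2] at this
    exact this.subset (by simp) convex_univ
  have hd : HasDerivAt ψ ⟪g, b - a⟫ 0 := by
    have hcurve : HasDerivAt (fun s : ℝ => s • (b - a) + a) (b - a) 0 := by
      simpa using ((hasDerivAt_id (0:ℝ)).smul_const (b - a)).add_const a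
    have h0 : (0:ℝ) • (b - a) + a = a := by simp
    have := (h0 ▸ hg.hasFDerivAt).comp_hasDerivAt 0 hcurve
    simp [ψ] at this
    exact this
  have := hcψ.le_slope_of_hasDerivAt (Set.mem_univ 0) (Set.mem_univ 1) one_pos hd
  simpa [slope_def_field, ψ] using this

set_option maxHeartbeats 2000000 in
open RealInnerProductSpace in
theorem stmt9 {H : Type*} [NormedAddCommGroup H] [InnerProductSpace ℝ H] [CompleteSpace H]
    (f : H → ℝ) (hf : ConvexOn ℝ Set.univ f)
    (ftil : H → ℝ → ℝ) (κ : ℝ) (hκ : 0 < κ)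
    (hconv : ∀ m : ℝ, 0 < m → ConvexOn ℝ Set.univ (fun z => ftil z m))
    (dmu : H → ℝ → ℝ)
    (hdmu : ∀ (z : H) (m : ℝ), 0 < m → HasDerivAt (fun m' => ftil z m') (dmu z m) m)
    (hdmubd : ∀ (z : H) (m : ℝ), 0 < m → |dmu z m| ≤ κ)
    (happrox : ∀ (z : H) (m : ℝ), 0 < m → |ftil z m - f z| ≤ κ * m)
    (G : H → ℝ → H)
    (hG : ∀ (z : H) (m : ℝ), 0 < m → HasGradientAt (fun w => ftil w m) (G z m) z)
    (t₀ α : ℝ) (ht₀ : 0 < t₀) (hα : 3 ≤ α)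
    (μ μ' : ℝ → ℝ) (hμpos : ∀ t, t₀ ≤ t → 0 < μ t)
    (hμderiv : ∀ t, t₀ ≤ t → HasDerivAt μ (μ' t) t)
    (hμdec : ∀ t, t₀ ≤ t → μ' t ≤ 0)
    (hμlim : Filter.Tendsto μ Filter.atTop (nhds 0))
    (x x' x'' : ℝ → H)
    (hx : ∀ t, t₀ ≤ t → HasDerivAt x (x' t) t)
    (hx' : ∀ t, t₀ ≤ t → HasDerivAt x' (x'' t) t)
    (heq : ∀ t, t₀ ≤ t → x'' t + (α / t) • x' t + G (x t) (μ t) = 0)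
    (hH1 : MeasureTheory.IntegrableOn (fun t => t * μ t) (Set.Ici t₀))
    (xs : H) (hxs : ∀ y, f xs ≤ f y) :
    (fun t => f (x t) - f xs) =O[Filter.atTop] (fun t => 1 / t ^ 2) := by
  have htpos : ∀ t : ℝ, t₀ ≤ t → 0 < t := fun t ht => lt_of_lt_of_le ht₀ ht
  -- Lipschitz in the smoothing parameter
  have hlip : ∀ (z : H) (m₁ m₂ : ℝ), 0 < m₁ → 0 < m₂ →
      |ftil z m₂ - ftil z m₁| ≤ κ * |m₂ - m₁| := by
    intro z m₁ m₂ h₁ h₂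
    have := Convex.norm_image_sub_le_of_norm_hasDerivWithin_le (s := Set.Ioi (0:ℝ))
      (f := fun m => ftil z m) (f' := fun m => dmu z m)
      (fun m hm => (hdmu z m hm).hasDerivWithinAt)
      (fun m hm => by simpa [Real.norm_eq_abs] using hdmubd z m hm)
      (convex_Ioi 0) h₁ h₂
    simpa [Real.norm_eq_abs] using this
  have hμcont : ContinuousOn μ (Set.Ici t₀) :=
    fun t ht => ((hμderiv t ht).continuousAt).continuousWithinAt
  have hμanti : AntitoneOn μ (Set.Ici t₀) := by
    apply antitoneOn_of_deriv_nonpos (convex_Ici t₀) hμcont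
    · intro s hs
      rw [interior_Ici] at hs
      exact ((hμderiv s (le_of_lt hs)).differentiableAt).differentiableWithinAt
    · intro s hs
      rw [interior_Ici] at hs
      rw [(hμderiv s (le_of_lt hs)).deriv]
      exact hμdec s (le_of_lt hs)
  set fs := f xs with hfs_def
  set w : ℝ → H := fun t => (α - 1) • (x t - xs) + t • x' t with hw_def
  set F : ℝ → ℝ := fun t => ftil (x t) (μ t) with hF_def
  set R : ℝ → ℝ := fun t => (1/2) * ‖w t‖^2 + κ * (t^2 * μ t) - t^2 * fs with hR_def
  set E : ℝ → ℝ := fun t => t^2 * F t + R t with hE_def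
  set μt : ℝ → ℝ := fun s => μ (max s t₀) with hμt_def
  set φ : ℝ → ℝ := fun s => (2*α - 2) * κ * (s * μt s) with hφ_def
  set B : ℝ → ℝ := fun t => E t₀ + ∫ s in t₀..t, φ s with hB_def
  have hFlow : ∀ t, t₀ ≤ t → fs - κ * μ t ≤ F t := by
    intro t ht
    have h1 := abs_le.1 (happrox (x t) (μ t) (hμpos t ht))
    have h2 := hxs (x t)
    simp only [hF_def]
    linarith [h1.1]
  have hFup : ∀ t, t₀ ≤ t → ftil xs (μ t) ≤ fs + κ * μ t := by
    intro t ht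
    have h1 := abs_le.1 (happrox xs (μ t) (hμpos t ht))
    linarith [h1.2]
  -- derivative of w
  have hw : ∀ t, t₀ ≤ t → HasDerivAt w (-(t • G (x t) (μ t))) t := by
    intro t ht
    have ht0 : t ≠ 0 := (htpos t ht).ne'
    have h1 : HasDerivAt (fun s => (α - 1) • (x s - xs)) ((α - 1) • x' t) t :=
      ((hx t ht).sub_const xs).const_smul (α - 1)
    have h2 : HasDerivAt (fun s : ℝ => s • x' s) (t • x'' t + (1:ℝ) • x' t) t := by
      exact ((hasDerivAt_id' t).smul (hx' t ht)).congr_deriv (by simp)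
    have hsum := h1.add h2
    have hGeq : G (x t) (μ t) = -(x'' t + (α / t) • x' t) :=
      eq_neg_of_add_eq_zero_right (heq t ht)
    have hkey : -(t • G (x t) (μ t)) = (α - 1) • x' t + (t • x'' t + (1:ℝ) • x' t) := by
      rw [hGeq, smul_neg, neg_neg, smul_add, smul_smul, mul_div_cancel₀ α ht0]
      module
    rw [hkey]
    exact hsum
  -- derivative of R
  have hR : ∀ t, t₀ ≤ t → HasDerivAt R
      (⟪w t, -(t • G (x t) (μ t))⟫ + κ * (2*t*μ t + t^2 * μ' t) - 2*t*fs) t := by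
    intro t ht
    have hQ : HasDerivAt (fun s => (1/2) * ‖w s‖^2) ⟪w t, -(t • G (x t) (μ t))⟫ t := by
      have hww := HasDerivAt.inner ℝ (hw t ht) (hw t ht)
      have h2 := hww.const_mul (1/2 : ℝ)
      have hfun : (fun s => (1/2:ℝ) * ⟪w s, w s⟫) = fun s => (1/2) * ‖w s‖^2 := by
        funext s; rw [real_inner_self_eq_norm_sq]
      rw [hfun] at h2
      refine h2.congr_deriv ?_
      rw [real_inner_comm (-(t • G (x t) (μ t))) (w t)]
      ring
    have hμ2 : HasDerivAt (fun s => κ * (s^2 * μ s)) (κ * (2*t*μ t + t^2*μ' t)) t := by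
      have := ((hasDerivAt_pow 2 t).mul (hμderiv t ht)).const_mul κ
      refine this.congr_deriv ?_
      ring
    have hc : HasDerivAt (fun s : ℝ => s^2 * fs) (2*t*fs) t := by
      have := (hasDerivAt_pow 2 t).mul_const fs
      refine this.congr_deriv ?_
      ring
    exact (hQ.add hμ2).sub hc
  -- continuity of F
  have hFc : ContinuousOn F (Set.Ici t₀) := by
    intro t ht
    have hm : 0 < μ t := hμpos t ht
    have hxt : ContinuousWithinAt x (Set.Ici t₀) t := (hx t ht).continuousAt.continuousWithinAt
    have hμct : ContinuousWithinAt μ (Set.Ici t₀) t := hμcont t ht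
    have hψ : ContinuousAt (fun z => ftil z (μ t)) (x t) :=
      ((hG (x t) (μ t) hm).differentiableAt).continuousAt
    have h1 : Tendsto (fun s => ftil (x s) (μ t)) (nhdsWithin t (Set.Ici t₀))
        (nhds (ftil (x t) (μ t))) := hψ.tendsto.comp hxt
    have h2 : Tendsto (fun s => F s - ftil (x s) (μ t)) (nhdsWithin t (Set.Ici t₀)) (nhds 0) := by
      apply squeeze_zero_norm' (a := fun s => κ * |μ s - μ t|)
      · filter_upwards [self_mem_nhdsWithin] with s hs
        simpa [Real.norm_eq_abs, hF_def] using hlip (x s) (μ t) (μ s) hm (hμpos s hs)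
      · have h0 : Tendsto (fun s => μ s - μ t) (nhdsWithin t (Set.Ici t₀)) (nhds 0) := by
          have := Filter.Tendsto.sub (hμct : Tendsto μ _ _) (tendsto_const_nhds (x := μ t))
          simpa using this
        simpa using h0.abs.const_mul κ
    have := h2.add h1
    simp only [sub_add_cancel] at this
    simpa [ContinuousWithinAt, hF_def] using this
  -- continuity of E
  have hxc : ContinuousOn x (Set.Ici t₀) := fun t ht => (hx t ht).continuousAt.continuousWithinAt
  have hx'c : ContinuousOn x' (Set.Ici t₀) := fun t ht => (hx' t ht).continuousAt.continuousWithinAt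
  have hwc : ContinuousOn w (Set.Ici t₀) := by
    apply ContinuousOn.add
    · exact (hxc.sub continuousOn_const).const_smul (α - 1)
    · exact continuousOn_id.smul hx'c
  have hEc : ContinuousOn E (Set.Ici t₀) := by
    apply ContinuousOn.add
    · exact (continuousOn_pow 2).mul hFc
    · apply ContinuousOn.sub
      · apply ContinuousOn.add
        · exact continuousOn_const.mul ((hwc.norm).pow 2)
        · exact continuousOn_const.mul ((continuousOn_pow 2).mul hμcont)
      · exact (continuousOn_pow 2).mul continuousOn_const
  -- φ is continuous
  have hμtc : Continuous μt := by
    apply hμcont.comp_continuous (continuous_id.max continuous_const)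
    intro s
    exact Set.mem_Ici.2 (le_max_right s t₀)
  have hφc : Continuous φ := continuous_const.mul (continuous_id.mul hμtc)
  have hBd : ∀ u, HasDerivAt B (φ u) u := fun u =>
    ((hφc.integral_hasStrictDerivAt t₀ u).hasDerivAt).const_add (E t₀)
  have hφeq : ∀ t, t₀ ≤ t → φ t = (2*α - 2) * κ * (t * μ t) := by
    intro t ht
    simp only [hφ_def, hμt_def, max_eq_left ht]
  -- the key slope estimate
  have hslope : ∀ t, t₀ ≤ t → ∀ r, φ t < r → ∃ᶠ z in nhdsWithin t (Set.Ioi t), slope E t z < r := by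
    intro t ht r hr
    have htp := htpos t ht
    have hm : 0 < μ t := hμpos t ht
    -- derivative of s ↦ ftil (x s) (μ t) at t
    have hψ : HasDerivAt (fun s => ftil (x s) (μ t)) ⟪G (x t) (μ t), x' t⟫ t := by
      have := ((hG (x t) (μ t) hm).hasFDerivAt.comp_hasDerivAt t (hx t ht))
      simp [InnerProductSpace.toDual_apply_apply] at this
      exact this
    have hmono : nhdsWithin t (Set.Ioi t) ≤ nhdsWithin t {t}ᶜ :=
      nhdsWithin_mono t (fun z hz => Set.mem_compl_singleton_iff.2 (ne_of_gt hz))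
    set R' : ℝ := ⟪w t, -(t • G (x t) (μ t))⟫ + κ * (2*t*μ t + t^2 * μ' t) - 2*t*fs with hR'_def
    set S : ℝ → ℝ := fun z =>
      z^2 * (slope (fun s => ftil (x s) (μ t)) t z + κ * ((μ t - μ z)/(z - t)))
      + (z + t) * F t + slope R t z with hS_def
    set L : ℝ := t^2 * (⟪G (x t) (μ t), x' t⟫ + κ * (-μ' t)) + (t + t) * F t + R' with hL_def
    have hS : Tendsto S (nhdsWithin t (Set.Ioi t)) (nhds L) := by
      have t1 : Tendsto (fun z : ℝ => z^2) (nhdsWithin t (Set.Ioi t)) (nhds (t^2)) :=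
        ((continuous_pow 2).tendsto t).mono_left nhdsWithin_le_nhds
      have t2 : Tendsto (slope (fun s => ftil (x s) (μ t)) t) (nhdsWithin t (Set.Ioi t))
          (nhds ⟪G (x t) (μ t), x' t⟫) :=
        (hasDerivAt_iff_tendsto_slope.1 hψ).mono_left hmono
      have t3 : Tendsto (fun z => (μ t - μ z)/(z - t)) (nhdsWithin t (Set.Ioi t))
          (nhds (-μ' t)) := by
        have h0 := ((hasDerivAt_iff_tendsto_slope.1 (hμderiv t ht)).mono_left hmono).neg
        have heq2 : (fun z => -slope μ t z) = (fun z => (μ t - μ z)/(z - t)) := by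
          funext z; rw [slope_def_field]; ring
        rwa [heq2] at h0
      have t4 : Tendsto (slope R t) (nhdsWithin t (Set.Ioi t)) (nhds R') :=
        (hasDerivAt_iff_tendsto_slope.1 (hR t ht)).mono_left hmono
      have t5 : Tendsto (fun z : ℝ => z + t) (nhdsWithin t (Set.Ioi t)) (nhds (t + t)) :=
        ((continuous_id.add continuous_const).tendsto t).mono_left nhdsWithin_le_nhds
      exact ((t1.mul (t2.add (t3.const_mul κ))).add (t5.mul_const (F t))).add t4
    -- L ≤ φ t
    have hinner : ⟪w t, -(t • G (x t) (μ t))⟫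
        = -((α-1) * (t * ⟪x t - xs, G (x t) (μ t)⟫)) - t^2 * ⟪G (x t) (μ t), x' t⟫ := by
      simp only [hw_def]
      rw [inner_neg_right, real_inner_smul_right, inner_add_left, real_inner_smul_left,
        real_inner_smul_left, real_inner_comm (x' t) (G (x t) (μ t))]
      ring
    have hgi : -⟪x t - xs, G (x t) (μ t)⟫ ≤ ftil xs (μ t) - ftil (x t) (μ t) := by
      have h := grad_ineq (hconv (μ t) hm) (hG (x t) (μ t) hm) xs
      have h2 : (⟪G (x t) (μ t), xs - x t⟫:ℝ) = -⟪x t - xs, G (x t) (μ t)⟫ := by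
        rw [show xs - x t = -(x t - xs) from (neg_sub (x t) xs).symm, inner_neg_right,
          real_inner_comm]
      rwa [h2] at h
    have hL : L ≤ φ t := by
      rw [hφeq t ht]
      have hFeq : F t = ftil (x t) (μ t) := rfl
      have hpos1 : (0:ℝ) ≤ (α-1) * t := by nlinarith
      have e1 : -((α-1) * (t * ⟪x t - xs, G (x t) (μ t)⟫))
          ≤ (α-1) * t * (ftil xs (μ t) - ftil (x t) (μ t)) := by
        have h := mul_le_mul_of_nonneg_left hgi hpos1
        nlinarith [h]
      have e2 := hFup t ht
      have e3 := hFlow t ht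
      have hmulU : (α-1) * t * (ftil xs (μ t) - fs) ≤ (α-1) * t * (κ * μ t) :=
        mul_le_mul_of_nonneg_left (by linarith) hpos1
      have hmulF : (3-α) * (t * (F t - fs)) ≤ (3-α) * (t * (-(κ * μ t))) := by
        apply mul_le_mul_of_nonpos_left _ (by linarith : (3:ℝ) - α ≤ 0)
        exact mul_le_mul_of_nonneg_left (by linarith [e3] : -(κ * μ t) ≤ F t - fs) htp.le
      rw [hL_def, hR'_def, hinner]
      rw [hFeq] at hmulF
      nlinarith [e1, hmulU, hmulF]
    have hev1 : ∀ᶠ z in nhdsWithin t (Set.Ioi t), S z < r :=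
      hS.eventually_lt_const (lt_of_le_of_lt hL hr)
    have hev2 : ∀ᶠ z in nhdsWithin t (Set.Ioi t), slope E t z ≤ S z := by
      filter_upwards [self_mem_nhdsWithin] with z hz
      have hzt : t < z := hz
      have hz0 : (0:ℝ) < z - t := sub_pos.2 hzt
      have hzt₀ : t₀ ≤ z := le_trans ht hzt.le
      have hμz : 0 < μ z := hμpos z hzt₀
      have hμle : μ z ≤ μ t := hμanti ht hzt₀ hzt.le
      have hkey : F z - F t ≤ (ftil (x z) (μ t) - ftil (x t) (μ t)) + κ * (μ t - μ z) := by
        have h1 := abs_le.1 (hlip (x z) (μ t) (μ z) hm hμz)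
        have h2 : |μ z - μ t| = μ t - μ z := by
          rw [abs_of_nonpos (by linarith)]; ring
        rw [h2] at h1
        have hFz : F z = ftil (x z) (μ z) := rfl
        have hFt : F t = ftil (x t) (μ t) := rfl
        rw [hFz, hFt]
        linarith [h1.2]
      have hs1 : slope E t z = z^2 * ((F z - F t)/(z - t)) + (z + t) * F t + slope R t z := by
        have hEz : E z = z^2 * F z + R z := rfl
        have hEt : E t = t^2 * F t + R t := rfl
        rw [slope_def_field, slope_def_field, hEz, hEt]
        field_simp [hz0.ne']
        ring
      have hs2 : (F z - F t)/(z - t)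
          ≤ ((ftil (x z) (μ t) - ftil (x t) (μ t)) + κ * (μ t - μ z))/(z - t) := by
        gcongr
      have hs3 : z^2 * ((F z - F t)/(z - t))
          ≤ z^2 * (((ftil (x z) (μ t) - ftil (x t) (μ t)) + κ * (μ t - μ z))/(z - t)) :=
        mul_le_mul_of_nonneg_left hs2 (sq_nonneg z)
      have hs4 : z^2 * (((ftil (x z) (μ t) - ftil (x t) (μ t)) + κ * (μ t - μ z))/(z - t))
          = z^2 * (slope (fun s => ftil (x s) (μ t)) t z + κ * ((μ t - μ z)/(z - t))) := by
        rw [slope_def_field]; ring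
      rw [hs1, hS_def]
      simp only
      linarith [hs3, hs4.le, hs4.ge]
    have hlt : ∀ᶠ z in nhdsWithin t (Set.Ioi t), slope E t z < r := by
      filter_upwards [hev1, hev2] with z h1 h2
      exact lt_of_le_of_lt h2 h1
    exact hlt.frequently
  -- Gronwall-type comparison
  have hmain : ∀ b, t₀ ≤ b → E b ≤ B b := by
    intro b hb
    have := image_le_of_liminf_slope_right_le_deriv_boundary (f := E) (a := t₀) (b := b)
      (B := B) (B' := φ)
      (hEc.mono (Set.Icc_subset_Ici_self))
      (by simp [hB_def])
      (fun u _ => (hBd u).continuousAt.continuousWithinAt)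
      (fun u _ => (hBd u).hasDerivWithinAt)
      (fun u hu r hr => hslope u hu.1 r hr)
    exact this (Set.right_mem_Icc.2 hb)
  -- bound B uniformly
  have hφint : IntegrableOn φ (Set.Ici t₀) := by
    have h1 : IntegrableOn (fun s => (2*α - 2) * κ * (s * μ s)) (Set.Ici t₀) :=
      hH1.const_mul ((2*α - 2) * κ)
    apply h1.congr_fun _ measurableSet_Ici
    intro s hs
    rw [hφeq s hs]
  have hφnn : ∀ s ∈ Set.Ici t₀, 0 ≤ φ s := by
    intro s hs
    rw [hφeq s hs]
    have := hμpos s hs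
    have := htpos s hs
    have : (0:ℝ) ≤ 2*α - 2 := by linarith
    positivity
  set K := E t₀ + ∫ s in Set.Ici t₀, φ s with hK_def
  have hEK : ∀ b, t₀ ≤ b → E b ≤ K := by
    intro b hb
    refine (hmain b hb).trans ?_
    have h1 : ∫ s in t₀..b, φ s = ∫ s in Set.Ioc t₀ b, φ s := intervalIntegral.integral_of_le hb
    have h2 : ∫ s in Set.Ioc t₀ b, φ s ≤ ∫ s in Set.Ici t₀, φ s := by
      apply setIntegral_mono_set hφint
      · exact (ae_restrict_iff' measurableSet_Ici).2 (ae_of_all _ hφnn)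
      · exact HasSubset.Subset.eventuallyLE (fun z hz => le_of_lt hz.1)
    simp only [hB_def, hK_def]
    linarith
  -- final bound
  have hfinal : ∀ t, t₀ ≤ t → t^2 * (f (x t) - fs) ≤ K := by
    intro t ht
    have h1 := abs_le.1 (happrox (x t) (μ t) (hμpos t ht))
    have h4 : f (x t) - F t ≤ κ * μ t := by simp only [hF_def]; linarith [h1.1]
    have h5 : t^2 * (f (x t) - F t) ≤ t^2 * (κ * μ t) := mul_le_mul_of_nonneg_left h4 (sq_nonneg t)
    have h2 : 0 ≤ (1/2) * ‖w t‖^2 := by positivity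
    have h3 : t^2 * F t + ((1/2) * ‖w t‖^2 + κ * (t^2 * μ t) - t^2 * fs) ≤ K := hEK t ht
    nlinarith [h5, h2, h3]
  -- conclusion
  rw [Asymptotics.isBigO_iff]
  refine ⟨K, ?_⟩
  filter_upwards [Filter.eventually_ge_atTop (max t₀ 1)] with t ht
  have ht₀' : t₀ ≤ t := le_trans (le_max_left _ _) ht
  have ht1 : (1:ℝ) ≤ t := le_trans (le_max_right _ _) ht
  have htp : (0:ℝ) < t := lt_of_lt_of_le one_pos ht1
  have hnn : 0 ≤ f (x t) - fs := by have := hxs (x t); simp only [hfs_def]; linarith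
  have hb := hfinal t ht₀'
  have ht2 : (0:ℝ) < t^2 := by positivity
  rw [Real.norm_eq_abs, Real.norm_eq_abs, abs_of_nonneg hnn,
    abs_of_nonneg (by positivity : (0:ℝ) ≤ 1/t^2)]
  calc f (x t) - fs ≤ K / t^2 := by rw [le_div_iff₀ ht2]; linarith [hb]
    _ = K * (1/t^2) := by ring
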